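/- The U(1) spin network states span the gauge-invariant subspace: the closed linear span in L²(T^E) of the character functions χ_n with n divergence-free equals the closed subspace of gauge-invariant elements {f ∈ L²(T^E) : f∘(g·) = f for every g ∈ T^V}, where (g·A)(e) = g(t(e)) + A(e) − g(s(e)). -/

import Mathlib

open MeasureTheory

theorem Real.fact_zero_lt_one : Fact ((0 : ℝ) < 1) :=
  ⟨zero_lt_one⟩

attribute [local instance] Real.fact_zero_lt_one

/-- The character function `χ_n(A) = ∏_e exp(2πi n(e) A(e))` on `T^E`, `T = ℝ/ℤ`. -/
noncomputable def chi {E : Type*} [Fintype E] (n : E → ℤ) (A : E → UnitAddCircle) : ℂ :=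
  ∏ e, fourier (n e) (A e)

/-- The additive gauge action of `g : V → T` on `A : E → T`:
`(g·A)(e) = g(t(e)) + A(e) − g(s(e))`. -/
def gaugeActAdd {V E M : Type*} [AddCommGroup M] (s t : E → V) (g : V → M) (A : E → M) :
    E → M :=
  fun e => g (t e) + A e - g (s e)

/-- `n : E → ℤ` is divergence-free: at every vertex `v`,
`Σ_{e : s(e)=v} n(e) = Σ_{e : t(e)=v} n(e)`. -/
def DivFree {V E : Type*} [Fintype E] [DecidableEq V] (s t : E → V) (n : E → ℤ) : Prop :=
  ∀ v : V, ∑ e ∈ Finset.univ.filter fun e => s e = v, n e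
    = ∑ e ∈ Finset.univ.filter fun e => t e = v, n e

noncomputable section Aux

namespace Stmt12Aux

open Set Function Submodule Complex

variable {E : Type*} [Fintype E]

/-- The product measure on the torus `T^E`. -/
abbrev μE (E : Type*) [Fintype E] : Measure (E → UnitAddCircle) :=
  Measure.pi fun _ : E => (volume : Measure UnitAddCircle)

instance : IsProbabilityMeasure (volume : Measure UnitAddCircle) :=
  ⟨UnitAddCircle.measure_univ⟩

example : IsProbabilityMeasure (μE E) := inferInstance
example : CompactSpace (E → UnitAddCircle) := inferInstance
example : BorelSpace (E → UnitAddCircle) := inferInstance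
example : (μE E).WeaklyRegular := inferInstance
example : (μE E).IsAddLeftInvariant := inferInstance

lemma fourier_apply_add (m : ℤ) (x y : UnitAddCircle) :
    fourier m (x + y) = fourier m x * fourier m y := by
  simp only [fourier_apply, smul_add, AddCircle.toCircle_add]
  push_cast
  ring

lemma fourier_apply_sub (m : ℤ) (x y : UnitAddCircle) :
    fourier m (x - y) = fourier m x * fourier (-m) y := by
  have hneg : fourier m (-y) = fourier (-m) y := by
    rw [fourier_apply, fourier_apply]
    congr 1
    rw [smul_neg, neg_smul]
  rw [sub_eq_add_neg, fourier_apply_add, hneg]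

lemma fourier_prod {ι : Type*} (s : Finset ι) (n : ι → ℤ) (x : UnitAddCircle) :
    ∏ i ∈ s, fourier (n i) x = fourier (∑ i ∈ s, n i) x := by
  classical
  induction s using Finset.cons_induction with
  | empty => simp [fourier_zero]
  | cons a s ha ih => rw [Finset.prod_cons, Finset.sum_cons, fourier_add, ih]


/-- `chi n` as a continuous map. -/
def chiC (n : E → ℤ) : C(E → UnitAddCircle, ℂ) :=
  ⟨chi n, by
    unfold chi
    exact continuous_finset_prod _ fun e _ =>
      (fourier (n e)).continuous.comp (continuous_apply e)⟩

@[simp] lemma chiC_apply (n : E → ℤ) (A : E → UnitAddCircle) : chiC n A = chi n A := rfl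

lemma chi_zero : chi (0 : E → ℤ) = fun _ => 1 := by
  funext A; simp [chi, fourier_zero]

lemma chi_mul (n m : E → ℤ) (A : E → UnitAddCircle) :
    chi n A * chi m A = chi (n + m) A := by
  simp only [chi, ← Finset.prod_mul_distrib]
  exact Finset.prod_congr rfl fun e _ => (fourier_add).symm

lemma chi_conj (n : E → ℤ) (A : E → UnitAddCircle) :
    (starRingEnd ℂ) (chi n A) = chi (-n) A := by
  simp only [chi, map_prod]
  exact Finset.prod_congr rfl fun e _ => by rw [← fourier_neg]; rfl

lemma chi_add_arg (n : E → ℤ) (c A : E → UnitAddCircle) :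
    chi n (c + A) = chi n c * chi n A := by
  simp only [chi, ← Finset.prod_mul_distrib]
  exact Finset.prod_congr rfl fun e _ => by
    rw [Pi.add_apply, fourier_apply_add]

/-- The star subalgebra generated by the characters. -/
def chiAlg (E : Type*) [Fintype E] : StarSubalgebra ℂ C(E → UnitAddCircle, ℂ) where
  toSubalgebra := Algebra.adjoin ℂ (Set.range chiC)
  star_mem' := by
    show Algebra.adjoin ℂ (Set.range (chiC (E := E))) ≤
      star (Algebra.adjoin ℂ (Set.range (chiC (E := E))))
    refine Algebra.adjoin_le ?_
    rintro - ⟨n, rfl⟩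
    refine Algebra.subset_adjoin ⟨-n, ?_⟩
    ext A
    exact (chi_conj n A).symm

lemma chiAlg_coe :
    Subalgebra.toSubmodule (chiAlg E).toSubalgebra = span ℂ (Set.range (chiC (E := E))) := by
  apply Algebra.adjoin_eq_span_of_subset
  refine Subset.trans ?_ Submodule.subset_span
  intro x hx
  refine Submonoid.closure_induction (fun _ => id) ⟨0, ?_⟩ ?_ hx
  · ext A; simp [chi_zero]
  · rintro - - - - ⟨m, rfl⟩ ⟨k, rfl⟩
    exact ⟨m + k, by ext A; exact (chi_mul m k A).symm⟩

lemma chiAlg_separatesPoints : (chiAlg E).SeparatesPoints := by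
  classical
  intro x y hxy
  obtain ⟨e, he⟩ : ∃ e, x e ≠ y e := by
    by_contra hc; push_neg at hc; exact hxy (funext hc)
  refine ⟨_, ⟨chiC (Pi.single e 1), Algebra.subset_adjoin ⟨_, rfl⟩, rfl⟩, ?_⟩
  have hx : ∀ z : E → UnitAddCircle, chiC (Pi.single e 1) z = fourier 1 (z e) := by
    intro z
    simp only [chiC_apply, chi]
    rw [Finset.prod_eq_single e (fun b _ hb => by
      simp [Pi.single_eq_of_ne hb, fourier_zero]) (fun h => absurd (Finset.mem_univ e) h)]
    simp
  dsimp only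
  rw [hx, hx]
  simp only [fourier_one]
  intro hc
  rw [Circle.coe_inj] at hc
  exact he (AddCircle.injective_toCircle one_ne_zero hc)

lemma span_chiC_closure_eq_top :
    (span ℂ (Set.range (chiC (E := E)))).topologicalClosure = ⊤ := by
  rw [← chiAlg_coe]
  exact congr_arg (Subalgebra.toSubmodule <| StarSubalgebra.toSubalgebra ·)
    (ContinuousMap.starSubalgebra_topologicalClosure_eq_top_of_separatesPoints _
      chiAlg_separatesPoints)

/-- The characters as elements of `L²`. -/
def Fn (n : E → ℤ) : Lp ℂ 2 (μE E) :=
  ContinuousMap.toLp (E := ℂ) 2 (μE E) ℂ (chiC n)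

lemma coeFn_Fn (n : E → ℤ) : ⇑(Fn n) =ᵐ[μE E] chi n :=
  ContinuousMap.coeFn_toLp (μE E) (chiC n)

lemma span_Fn_closure_eq_top :
    (span ℂ (Set.range (Fn (E := E)))).topologicalClosure = ⊤ := by
  convert (ContinuousMap.toLp_denseRange ℂ (μE E) ℂ
      ENNReal.ofNat_ne_top).topologicalClosure_map_submodule
      span_chiC_closure_eq_top
  · rfl
  erw [map_span, Set.range_comp]
  simp only [ContinuousLinearMap.coe_coe]


lemma integral_fourier_unit (m : ℤ) :
    ∫ x : UnitAddCircle, (fourier m x : ℂ) = if m = 0 then 1 else 0 := by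
  split_ifs with h
  · subst h
    simp only [fourier_zero]
    simp
  · exact integral_eq_zero_of_add_right_eq_neg
      (fourier_add_half_inv_index h one_pos)

lemma integral_chi (n : E → ℤ) :
    ∫ A, chi n A ∂(μE E) = if n = 0 then 1 else 0 := by
  have hvol : μE E = (volume : Measure (E → UnitAddCircle)) := rfl
  rw [hvol]
  unfold chi
  rw [show (∫ A : E → UnitAddCircle, ∏ e, (fourier (n e) (A e) : ℂ))
      = ∏ e, ∫ x : UnitAddCircle, (fourier (n e) x : ℂ) from
    MeasureTheory.integral_fintype_prod_eq_prod fun e x => (fourier (n e) x : ℂ)]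
  simp only [integral_fourier_unit]
  by_cases hn : n = 0
  · subst hn; simp
  · rw [if_neg hn]
    obtain ⟨e, he⟩ : ∃ e, n e ≠ 0 := by
      by_contra hc; push_neg at hc; exact hn (funext hc)
    exact Finset.prod_eq_zero (Finset.mem_univ e) (if_neg he)

lemma inner_Fn (n m : E → ℤ) :
    (inner ℂ (Fn n) (Fn m) : ℂ) = if n = m then 1 else 0 := by
  rw [Fn, Fn, ContinuousMap.inner_toLp]
  have : ∀ A, (starRingEnd ℂ) (chiC n A) * chiC m A = chi (m - n) A := by
    intro A
    rw [chiC_apply, chiC_apply, chi_conj, chi_mul]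
    congr 1
    abel
  simp_rw [mul_comm ((chiC m) _) _]
  simp_rw [this]
  rw [integral_chi]
  congr 1
  simp only [eq_iff_iff, sub_eq_zero]
  constructor
  · rintro rfl; rfl
  · rintro rfl; rfl


section Gauge

variable {V : Type*} [Fintype V] [DecidableEq V] (s t : E → V)

lemma gauge_eq_add (g : V → UnitAddCircle) :
    gaugeActAdd s t g = fun A => (fun e => g (t e) - g (s e)) + A := by
  funext A e
  show g (t e) + A e - g (s e) = (g (t e) - g (s e)) + A e
  abel

lemma measurePreserving_gauge (g : V → UnitAddCircle) :
    MeasurePreserving (gaugeActAdd s t g) (μE E) (μE E) := by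
  rw [gauge_eq_add]
  exact measurePreserving_add_left (μE E) _

lemma chi_gauge (n : E → ℤ) (g : V → UnitAddCircle) (A : E → UnitAddCircle) :
    chi n (gaugeActAdd s t g A) = chi n (fun e => g (t e) - g (s e)) * chi n A := by
  rw [gauge_eq_add]; exact chi_add_arg n _ A

lemma chi_gauge_const (n : E → ℤ) (g : V → UnitAddCircle) :
    chi n (fun e => g (t e) - g (s e))
      = ∏ v, fourier ((∑ e ∈ Finset.univ.filter fun e => t e = v, n e)
          - (∑ e ∈ Finset.univ.filter fun e => s e = v, n e)) (g v) := by
  have key : ∀ (f : E → V) (k : E → ℤ), (∏ e, (fourier (k e) (g (f e)) : ℂ))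
      = ∏ v, (fourier (∑ e ∈ Finset.univ.filter fun e => f e = v, k e) (g v) : ℂ) := by
    intro f k
    rw [← Finset.prod_fiberwise_of_maps_to (fun e _ => Finset.mem_univ (f e))
      (fun e => (fourier (k e) (g (f e)) : ℂ))]
    refine Finset.prod_congr rfl fun v _ => ?_
    rw [← fourier_prod]
    refine Finset.prod_congr rfl fun e he => ?_
    rw [(Finset.mem_filter.1 he).2]
  calc chi n (fun e => g (t e) - g (s e))
      = ∏ e, ((fourier (n e) (g (t e)) : ℂ) * (fourier (-(n e)) (g (s e)) : ℂ)) :=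
        Finset.prod_congr rfl fun e _ => fourier_apply_sub _ _ _
    _ = (∏ e, (fourier (n e) (g (t e)) : ℂ)) * ∏ e, (fourier (-(n e)) (g (s e)) : ℂ) :=
        Finset.prod_mul_distrib
    _ = _ := by
        rw [key t n, key s fun e => -(n e), ← Finset.prod_mul_distrib]
        refine Finset.prod_congr rfl fun v _ => ?_
        rw [← fourier_add]
        congr 1
        rw [Finset.sum_neg_distrib, ← sub_eq_add_neg]

lemma chi_gauge_const_one {n : E → ℤ} (hn : DivFree s t n) (g : V → UnitAddCircle) :
    chi n (fun e => g (t e) - g (s e)) = 1 := by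
  rw [chi_gauge_const]
  refine Finset.prod_eq_one fun v _ => ?_
  rw [hn v, sub_self, fourier_zero]

lemma Fn_comp_gauge {n : E → ℤ} (hn : DivFree s t n) (g : V → UnitAddCircle) :
    Lp.compMeasurePreserving _ (measurePreserving_gauge s t g) (Fn n) = Fn n := by
  apply Lp.ext
  have h1 := Lp.coeFn_compMeasurePreserving (Fn n) (measurePreserving_gauge s t g)
  have h2 : ⇑(Fn n) ∘ (gaugeActAdd s t g) =ᵐ[μE E] (chi n) ∘ (gaugeActAdd s t g) :=
    (measurePreserving_gauge s t g).quasiMeasurePreserving.ae_eq_comp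
      (coeFn_Fn n)
  have h3 : (chi n) ∘ (gaugeActAdd s t g) = chi n := by
    funext A
    show chi n (gaugeActAdd s t g A) = chi n A
    rw [chi_gauge, chi_gauge_const_one s t hn, one_mul]
  refine h1.trans (h2.trans ?_)
  rw [h3]
  exact (coeFn_Fn n).symm

lemma inner_Fn_invariant_eq_zero {n : E → ℤ} (hn : ¬ DivFree s t n)
    (h : Lp ℂ 2 (μE E))
    (hh : ∀ g : V → UnitAddCircle, ⇑h ∘ gaugeActAdd s t g =ᵐ[μE E] ⇑h) :
    (inner ℂ (Fn n) h : ℂ) = 0 := by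
  classical
  obtain ⟨v, hv⟩ := not_forall.1 hn
  set m : ℤ := (∑ e ∈ Finset.univ.filter fun e => t e = v, n e)
    - (∑ e ∈ Finset.univ.filter fun e => s e = v, n e) with hm
  have hm0 : m ≠ 0 := sub_ne_zero.2 fun hc => hv hc.symm
  set g : V → UnitAddCircle :=
    fun w => if w = v then ((1 / (2 * (m:ℝ)) : ℝ) : UnitAddCircle) else 0 with hg
  have hchi : chi n (fun e => g (t e) - g (s e)) = -1 := by
    rw [chi_gauge_const]
    rw [Finset.prod_eq_single v
      (fun w _ hw => by simp [hg, if_neg hw, fourier_eval_zero])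
      (fun hv' => absurd (Finset.mem_univ v) hv')]
    rw [← hm, hg]
    simp only [eq_self_iff_true, if_true]
    rw [fourier_coe_apply, ← Complex.exp_pi_mul_I]
    congr 1
    have hmc : (m : ℂ) ≠ 0 := Int.cast_ne_zero.2 hm0
    push_cast
    field_simp
  have key : (inner ℂ (Fn n) h : ℂ)
      = ∫ A, (starRingEnd ℂ) (chi n A) * h A ∂(μE E) := by
    rw [MeasureTheory.L2.inner_def]
    refine integral_congr_ae ?_
    filter_upwards [coeFn_Fn (E := E) n] with A hA
    rw [RCLike.inner_apply', hA]
  have hcomp : ∫ A, (starRingEnd ℂ) (chi n A) * h A ∂(μE E)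
      = ∫ A, (starRingEnd ℂ) (chi n ((fun e => g (t e) - g (s e)) + A))
          * h ((fun e => g (t e) - g (s e)) + A) ∂(μE E) :=
    ((measurePreserving_add_left (μE E) (fun e => g (t e) - g (s e))).integral_comp
      (MeasurableEquiv.addLeft (fun e => g (t e) - g (s e))).measurableEmbedding
      (fun A => (starRingEnd ℂ) (chi n A) * h A)).symm
  have hgauge : ⇑h ∘ (fun A : E → UnitAddCircle => (fun e => g (t e) - g (s e)) + A)
      =ᵐ[μE E] ⇑h := by
    have := hh g
    rwa [gauge_eq_add] at this
  have hinv : (fun A => (starRingEnd ℂ) (chi n ((fun e => g (t e) - g (s e)) + A))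
        * h ((fun e => g (t e) - g (s e)) + A))
      =ᵐ[μE E] fun A => (starRingEnd ℂ) (chi n (fun e => g (t e) - g (s e)))
        * ((starRingEnd ℂ) (chi n A) * h A) := by
    filter_upwards [hgauge] with A hA
    have hA' : h ((fun e => g (t e) - g (s e)) + A) = h A := hA
    rw [chi_add_arg, map_mul, hA']
    ring
  have main : (inner ℂ (Fn n) h : ℂ)
      = (starRingEnd ℂ) (chi n (fun e => g (t e) - g (s e))) * (inner ℂ (Fn n) h : ℂ) := by
    conv_lhs => rw [key, hcomp, integral_congr_ae hinv]
    rw [MeasureTheory.integral_const_mul, ← key]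
  rw [hchi] at main
  simp only [map_neg, map_one] at main
  linear_combination (1/2 : ℂ) * main

end Gauge


end Stmt12Aux

end Aux

open Stmt12Aux Submodule in
theorem stmt12 {V E : Type*} [Fintype V] [Fintype E] [DecidableEq V] (s t : E → V) :
    ∃ F : (E → ℤ) → Lp ℂ 2 (Measure.pi fun _ : E => (volume : Measure UnitAddCircle)),
      (∀ n, ⇑(F n) =ᵐ[Measure.pi fun _ : E => (volume : Measure UnitAddCircle)] chi n) ∧
      ((Submodule.span ℂ (F '' {n | DivFree s t n})).topologicalClosure : Set _) =
        {h : Lp ℂ 2 (Measure.pi fun _ : E => (volume : Measure UnitAddCircle)) |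
          ∀ g : V → UnitAddCircle,
            ⇑h ∘ gaugeActAdd s t g
              =ᵐ[Measure.pi fun _ : E => (volume : Measure UnitAddCircle)] ⇑h} := by
  classical
  refine ⟨Fn, fun n => coeFn_Fn n, ?_⟩
  apply subset_antisymm
  · -- closure of the span is contained in the invariant set
    intro h hmem g
    set Tli := Lp.compMeasurePreservingₗᵢ (E := ℂ) (p := 2) ℂ (gaugeActAdd s t g)
      (measurePreserving_gauge s t g) with hTli
    have hle : Submodule.span ℂ (Fn '' {n | DivFree s t n})
        ≤ LinearMap.eqLocus Tli.toLinearMap LinearMap.id := by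
      rw [Submodule.span_le]
      rintro - ⟨n, hn, rfl⟩
      show Tli (Fn n) = Fn n
      exact Fn_comp_gauge s t hn g
    have hclosed : IsClosed ((LinearMap.eqLocus Tli.toLinearMap LinearMap.id : Submodule ℂ _)
        : Set (Lp ℂ 2 (μE E))) := by
      show IsClosed {h : Lp ℂ 2 (μE E) | Tli h = h}
      exact isClosed_eq Tli.continuous continuous_id
    have hmem' : h ∈ LinearMap.eqLocus Tli.toLinearMap LinearMap.id :=
      Submodule.topologicalClosure_minimal _ hle hclosed hmem
    have heq : Tli h = h := hmem'
    have hcoe := Lp.coeFn_compMeasurePreserving h (measurePreserving_gauge s t g)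
    have : ⇑(Tli h) =ᵐ[μE E] ⇑h ∘ gaugeActAdd s t g := hcoe
    rw [heq] at this
    exact this.symm
  · -- the invariant set is contained in the closure of the span
    intro h hh
    set K := Submodule.span ℂ (Fn '' {n | DivFree s t n}) with hK
    set Kc := K.topologicalClosure with hKc
    haveI : CompleteSpace Kc := K.isClosed_topologicalClosure.completeSpace_coe
    set Ph : Lp ℂ 2 (μE E) := (orthogonalProjection Kc h : Lp ℂ 2 (μE E)) with hPh
    set u : Lp ℂ 2 (μE E) := h - Ph with hu
    have hu_orth : u ∈ Kcᗮ := Submodule.sub_starProjection_mem_orthogonal (K := Kc) h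
    have horth_eq : Kcᗮ = Kᗮ := by
      rw [hKc, ← K.orthogonal_orthogonal_eq_closure, Submodule.triorthogonal_eq_orthogonal]
    -- every coefficient of u vanishes
    have hcoeff : ∀ n : E → ℤ, (inner ℂ (Fn n) u : ℂ) = 0 := by
      intro n
      by_cases hn : DivFree s t n
      · have hFnK : Fn n ∈ Kc := K.le_topologicalClosure
          (Submodule.subset_span ⟨n, hn, rfl⟩)
        exact Submodule.inner_right_of_mem_orthogonal hFnK hu_orth
      · have h1 : (inner ℂ (Fn n) h : ℂ) = 0 := inner_Fn_invariant_eq_zero s t hn h hh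
        have hFn_orth : Fn n ∈ Kᗮ := by
          rw [Submodule.mem_orthogonal']
          intro y hy
          induction hy using Submodule.span_induction with
          | mem y hy =>
            obtain ⟨m, hm, rfl⟩ := hy
            have hnm : n ≠ m := fun hc => hn (hc ▸ hm)
            rw [inner_Fn, if_neg hnm]
          | zero => exact inner_zero_right _
          | add y z _ _ hy hz => rw [inner_add_right, hy, hz, add_zero]
          | smul c y _ hy => rw [inner_smul_right, hy, mul_zero]
        have h2 : (inner ℂ (Fn n) Ph : ℂ) = 0 := by
          have hPhKc : Ph ∈ Kc := SetLike.coe_mem _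
          have : Fn n ∈ Kcᗮ := horth_eq ▸ hFn_orth
          exact Submodule.inner_left_of_mem_orthogonal hPhKc this
        rw [hu, inner_sub_right, h1, h2, sub_zero]
    have hu_total : u ∈ (Submodule.span ℂ (Set.range (Fn (E := E))))ᗮ := by
      rw [Submodule.mem_orthogonal]
      intro y hy
      induction hy using Submodule.span_induction with
      | mem y hy => obtain ⟨m, rfl⟩ := hy; exact hcoeff m
      | zero => exact inner_zero_left _
      | add y z _ _ hy hz => rw [inner_add_left, hy, hz, add_zero]
      | smul c y _ hy => rw [inner_smul_left, hy, mul_zero]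
    have hbot : (Submodule.span ℂ (Set.range (Fn (E := E))))ᗮ = ⊥ :=
      Submodule.topologicalClosure_eq_top_iff.1 span_Fn_closure_eq_top
    have hu0 : u = 0 := by
      rw [hbot] at hu_total
      simpa using hu_total
    have : h = Ph := by rw [← sub_eq_zero]; exact hu0
    rw [this]
    exact SetLike.coe_mem _
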